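/- Let H be a real Hilbert space, β > 0, and T : H → H. Then β·Id + T is (1/(2β))-cocoercive (i.e., ⟨(βId+T)x − (βId+T)y, x − y⟩ ≥ (1/(2β))‖(βId+T)x − (βId+T)y‖² for all x, y) if and only if T is β-Lipschitz continuous. -/
import Mathlib


open RealInnerProductSpace

lemma coco_key {H : Type*} [NormedAddCommGroup H] [InnerProductSpace ℝ H]
    (β : ℝ) (hβ : 0 < β) (u v : H) :
    (⟪β • u + v, u⟫ ≥ (1 / (2 * β)) * ‖β • u + v‖ ^ 2) ↔ ‖v‖ ≤ β * ‖u‖ := by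
  have h1 : ‖β • u + v‖ ^ 2 = β ^ 2 * ‖u‖ ^ 2 + 2 * (β * ⟪u, v⟫) + ‖v‖ ^ 2 := by
    rw [norm_add_sq_real, norm_smul, real_inner_smul_left, Real.norm_eq_abs,
      abs_of_pos hβ]
    ring
  have h2 : ⟪β • u + v, u⟫ = β * ‖u‖ ^ 2 + ⟪v, u⟫ := by
    rw [inner_add_left, real_inner_smul_left, real_inner_self_eq_norm_sq]
  have comm : ⟪v, u⟫ = ⟪u, v⟫ := real_inner_comm _ _
  rw [ge_iff_le, one_div, inv_mul_le_iff₀ (by positivity), h1, h2, comm]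
  constructor
  · intro h
    have hsq : ‖v‖ ^ 2 ≤ (β * ‖u‖) ^ 2 := by nlinarith
    exact (pow_le_pow_iff_left₀ (norm_nonneg v) (by positivity) two_ne_zero).mp hsq
  · intro h
    nlinarith [norm_nonneg v, norm_nonneg u, mul_le_mul h h (norm_nonneg v)
      (by positivity : (0:ℝ) ≤ β * ‖u‖)]

theorem coco_vs_lipschitz
    {H : Type*} [NormedAddCommGroup H] [InnerProductSpace ℝ H]
    (β : ℝ) (hβ : 0 < β) (T : H → H) :
    (∀ x y : H, ⟪(β • x + T x) - (β • y + T y), x - y⟫ ≥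
      (1 / (2 * β)) * ‖(β • x + T x) - (β • y + T y)‖ ^ 2) ↔
    (∀ x y : H, ‖T x - T y‖ ≤ β * ‖x - y‖) := by
  have key : ∀ x y : H, (β • x + T x) - (β • y + T y)
      = β • (x - y) + (T x - T y) := by
    intro x y
    rw [smul_sub]; abel
  constructor
  · intro h x y
    have := h x y
    rw [key] at this
    exact (coco_key β hβ (x - y) (T x - T y)).mp this
  · intro h x y
    rw [key]
    exact (coco_key β hβ (x - y) (T x - T y)).mpr (h x y)
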